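/- Let E be a real Banach space and K ⊆ E a compact subset. Then there exists a sequence (xₙ) in E converging to 0 such that K is contained in the closed convex hull of the set {xₙ : n ∈ ℕ}. -/

import Mathlib

open Filter Metric Set

/-- One covering step: a compact set is contained in `F + C'` with `F` a finite subset
and `C'` compact inside a small closed ball. -/
lemma aux_grothendieck_step {E : Type*} [NormedAddCommGroup E] [NormedSpace ℝ E]
    (C : Set E) (δ : ℝ) (hδ : 0 < δ) :
    ∃ F C' : Set E, IsCompact C →
      (F ⊆ C ∧ F.Finite ∧ IsCompact C' ∧ C' ⊆ Metric.closedBall 0 δ ∧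
        ∀ p ∈ C, ∃ y ∈ F, ∃ z ∈ C', p = y + z) := by
  by_cases hC : IsCompact C
  · obtain ⟨t, hts, htf, hcov⟩ := hC.finite_cover_balls hδ
    refine ⟨t, (⋃ y ∈ t, (fun v => v - y) '' C) ∩ Metric.closedBall 0 δ, fun _ => ?_⟩
    refine ⟨hts, htf, ?_, Set.inter_subset_right, ?_⟩
    · refine IsCompact.inter_right ?_ Metric.isClosed_closedBall
      exact htf.isCompact_biUnion fun y _ => hC.image (continuous_sub_right y)
    · intro p hp
      obtain ⟨y, hyt, hpy⟩ := by simpa using hcov hp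
      refine ⟨y, hyt, p - y, ⟨?_, ?_⟩, by abel⟩
      · exact Set.mem_biUnion hyt ⟨p, hp, rfl⟩
      · simpa [Metric.mem_closedBall, dist_eq_norm, ← dist_eq_norm] using hpy.le
  · exact ⟨∅, ∅, fun h => absurd h hC⟩

/-- Every compact subset of a real Banach space is contained in the closed convex hull
of a sequence converging to `0`. -/
theorem compact_subset_closedConvexHull_of_null_sequence
    {E : Type*} [NormedAddCommGroup E] [NormedSpace ℝ E] [CompleteSpace E]
    {K : Set E} (hK : IsCompact K) :
    ∃ x : ℕ → E, Filter.Tendsto x Filter.atTop (nhds (0 : E)) ∧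
      K ⊆ closure (convexHull ℝ (Set.range x)) := by
  classical
  obtain ⟨M, hM0, hKM⟩ : ∃ M : ℝ, 0 ≤ M ∧ K ⊆ Metric.closedBall 0 M := by
    obtain ⟨M, hM⟩ := hK.isBounded.subset_closedBall 0
    exact ⟨max M 0, le_max_right _ _,
      hM.trans (Metric.closedBall_subset_closedBall (le_max_left _ _))⟩
  have hstep : ∀ (C : Set E) (n : ℕ), ∃ F C' : Set E, IsCompact C →
      (F ⊆ C ∧ F.Finite ∧ IsCompact C' ∧ C' ⊆ Metric.closedBall 0 ((4:ℝ)⁻¹ ^ (n+1)) ∧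
        ∀ p ∈ C, ∃ y ∈ F, ∃ z ∈ C', p = y + z) :=
    fun C n => aux_grothendieck_step C _ (by positivity)
  choose Fc Cc hP using hstep
  set D : ℕ → Set E := fun n => Nat.rec K (fun n Dn => Cc Dn n) n with hDdef
  have hD0 : D 0 = K := rfl
  have hDsucc : ∀ n, D (n+1) = Cc (D n) n := fun n => rfl
  have hDc : ∀ n, IsCompact (D n) := by
    intro n; induction n with
    | zero => exact hK
    | succ n ih => exact ((hP (D n) n ih).2.2.1)
  have hPn : ∀ n, Fc (D n) n ⊆ D n ∧ (Fc (D n) n).Finite ∧ IsCompact (Cc (D n) n) ∧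
      Cc (D n) n ⊆ Metric.closedBall 0 ((4:ℝ)⁻¹ ^ (n+1)) ∧
      ∀ p ∈ D n, ∃ y ∈ Fc (D n) n, ∃ z ∈ Cc (D n) n, p = y + z :=
    fun n => hP (D n) n (hDc n)
  -- bound on D n
  have hDb : ∀ n, D n ⊆ Metric.closedBall 0 ((M+1) * (4:ℝ)⁻¹ ^ n) := by
    intro n
    cases n with
    | zero =>
      rw [hD0]; simpa using hKM.trans (Metric.closedBall_subset_closedBall (by linarith))
    | succ n =>
      refine ((hPn n).2.2.2.1).trans (Metric.closedBall_subset_closedBall ?_)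
      have : (0:ℝ) ≤ (4:ℝ)⁻¹ ^ (n+1) := by positivity
      nlinarith
  -- the scaled point sets
  set G : ℕ → Set E := fun n => insert (0:E) ((fun v => ((2:ℝ)^(n+1)) • v) '' Fc (D n) n)
    with hGdef
  have hGfin : ∀ n, (G n).Finite := fun n => Set.Finite.insert _ ((hPn n).2.1.image _)
  set L : ℕ → List E := fun n => (hGfin n).toFinset.toList with hLdef
  set f : ℕ → ℕ → E := fun n k => (L n).getD k 0 with hfdef
  set x : ℕ → E := fun m => f m.unpair.1 m.unpair.2 with hxdef
  have hLmem : ∀ n, ∀ v ∈ L n, v ∈ G n := by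
    intro n v hv
    have := Finset.mem_toList.mp hv
    exact (Set.Finite.mem_toFinset _).mp this
  have hfmem : ∀ n k, f n k ∈ G n := by
    intro n k
    by_cases h : k < (L n).length
    · rw [hfdef]; simp only
      rw [List.getD_eq_getElem _ _ h]
      exact hLmem n _ (List.getElem_mem h)
    · rw [hfdef]; simp only
      rw [List.getD_eq_default _ _ (le_of_not_gt h)]
      exact Set.mem_insert _ _
  have hGx : ∀ n, G n ⊆ Set.range x := by
    intro n g hg
    have hg' : g ∈ L n := Finset.mem_toList.mpr ((Set.Finite.mem_toFinset _).mpr hg)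
    obtain ⟨k, hk, hgk⟩ := List.mem_iff_getElem.mp hg'
    refine ⟨Nat.pair n k, ?_⟩
    rw [hxdef]; simp only [Nat.unpair_pair]
    rw [hfdef]; simp only
    rw [List.getD_eq_getElem _ _ hk]; exact hgk
  -- norm bounds
  set c : ℕ → ℝ := fun n => 2*(M+1) * (2:ℝ)⁻¹ ^ n with hcdef
  have hnorm : ∀ n, ∀ v ∈ G n, ‖v‖ ≤ c n := by
    intro n v hv
    rcases hv with rfl | ⟨y, hy, rfl⟩
    · simp only [norm_zero, hcdef]; positivity
    · have hyD : y ∈ D n := (hPn n).1 hy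
      have hyb : ‖y‖ ≤ (M+1) * (4:ℝ)⁻¹ ^ n := by
        simpa [Metric.mem_closedBall, dist_eq_norm] using hDb n hyD
      have h4 : ((4:ℝ)⁻¹) ^ n = (2:ℝ)⁻¹ ^ n * (2:ℝ)⁻¹ ^ n := by
        rw [← mul_pow]; norm_num
      have h2 : (2:ℝ) ^ (n+1) * (2:ℝ)⁻¹ ^ n = 2 := by
        rw [pow_succ, inv_pow]
        field_simp
        try ring
      rw [norm_smul]
      simp only [Real.norm_eq_abs, abs_pow, abs_two]
      calc (2:ℝ) ^ (n+1) * ‖y‖ ≤ (2:ℝ)^(n+1) * ((M+1) * (4:ℝ)⁻¹ ^ n) := by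
            apply mul_le_mul_of_nonneg_left hyb (by positivity)
        _ = c n := by rw [hcdef]; simp only; rw [h4]; linear_combination ((M+1) * (2:ℝ)⁻¹^n) * h2
  have hc0 : Filter.Tendsto c Filter.atTop (nhds 0) := by
    have := (tendsto_pow_atTop_nhds_zero_of_lt_one (by norm_num : (0:ℝ) ≤ 2⁻¹)
      (by norm_num)).const_mul (2*(M+1))
    simpa [hcdef] using this
  -- tendsto of x
  have hx0 : Filter.Tendsto x Filter.atTop (nhds (0:E)) := by
    rw [← Nat.cofinite_eq_atTop]
    refine Metric.tendsto_nhds.2 fun ε hε => ?_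
    rw [Filter.eventually_cofinite]
    have hB : {n : ℕ | ¬ c n < ε}.Finite := by
      have h := hc0.eventually (gt_mem_nhds hε)
      rw [← Nat.cofinite_eq_atTop, Filter.eventually_cofinite] at h
      exact h
    have hT : {pr : ℕ × ℕ | ¬ dist (f pr.1 pr.2) 0 < ε}.Finite := by
      refine Set.Finite.subset (hB.biUnion (fun n _ =>
        (Set.finite_singleton n).prod (Set.finite_Iio (L n).length))) ?_
      rintro ⟨n, k⟩ hpr
      simp only [Set.mem_setOf_eq, dist_zero_right] at hpr
      have hkl : k < (L n).length := by
        by_contra h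
        apply hpr
        rw [hfdef]; simp only
        rw [List.getD_eq_default _ _ (le_of_not_gt h)]
        simpa using hε
      have hnB : n ∈ {n : ℕ | ¬ c n < ε} := by
        intro h
        exact hpr (lt_of_le_of_lt (hnorm n _ (hfmem n k)) h)
      exact Set.mem_biUnion hnB ⟨rfl, hkl⟩
    refine Set.Finite.subset (hT.image (fun pr : ℕ × ℕ => Nat.pair pr.1 pr.2)) ?_
    intro m hm
    exact ⟨(m.unpair.1, m.unpair.2), hm, by simp [Nat.pair_unpair]⟩
  refine ⟨x, hx0, ?_⟩
  have h0x : (0:E) ∈ Set.range x := hGx 0 (Set.mem_insert _ _)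
  -- main inductive claim
  have key : ∀ n, ∀ p ∈ K, ∃ p' ∈ D n, ∀ u ∈ convexHull ℝ (Set.range x),
      (p - p') + ((2:ℝ)⁻¹ ^ n) • u ∈ convexHull ℝ (Set.range x) := by
    intro n
    induction n with
    | zero =>
      intro p hp
      exact ⟨p, hp, fun u hu => by simpa using hu⟩
    | succ n ih =>
      intro p hp
      obtain ⟨p', hp', hcomb⟩ := ih p hp
      obtain ⟨y, hy, z, hz, hpyz⟩ := (hPn n).2.2.2.2 p' hp'
      refine ⟨z, hz, ?_⟩
      intro u hu
      have hzx : ((2:ℝ)^(n+1)) • y ∈ convexHull ℝ (Set.range x) :=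
        subset_convexHull ℝ _ (hGx n (Set.mem_insert_of_mem _ ⟨y, hy, rfl⟩))
      have hmid : ((1:ℝ)/2) • (((2:ℝ)^(n+1)) • y) + ((1:ℝ)/2) • u
          ∈ convexHull ℝ (Set.range x) :=
        (convex_convexHull ℝ _) hzx hu (by norm_num) (by norm_num) (by norm_num)
      have h := hcomb _ hmid
      have heq : (p - p') + ((2:ℝ)⁻¹ ^ n) •
            (((1:ℝ)/2) • (((2:ℝ)^(n+1)) • y) + ((1:ℝ)/2) • u)
          = (p - z) + ((2:ℝ)⁻¹ ^ (n+1)) • u := by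
        have h1 : (2:ℝ)⁻¹ ^ n * (1/2) * (2:ℝ)^(n+1) = 1 := by
          rw [pow_succ, inv_pow]
          field_simp
        have h2 : (2:ℝ)⁻¹ ^ n * (1/2) = (2:ℝ)⁻¹ ^ (n+1) := by
          rw [pow_succ]; ring
        rw [smul_add, smul_smul, smul_smul, smul_smul, h1, h2, one_smul, hpyz]
        abel
      rwa [heq] at h
  intro p hp
  have key' := fun n => key n p hp
  choose q hqD hqcomb using key'
  have hqmem : ∀ n, p - q n ∈ convexHull ℝ (Set.range x) := by
    intro n
    have := hqcomb n 0 (subset_convexHull ℝ _ h0x)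
    simpa using this
  have hq0 : Filter.Tendsto q Filter.atTop (nhds (0:E)) := by
    refine squeeze_zero_norm (a := fun n => (M+1) * (4:ℝ)⁻¹ ^ n) (fun n => ?_) ?_
    · simpa [Metric.mem_closedBall, dist_eq_norm] using hDb n (hqD n)
    · have := (tendsto_pow_atTop_nhds_zero_of_lt_one (by norm_num : (0:ℝ) ≤ 4⁻¹)
        (by norm_num)).const_mul (M+1)
      simpa using this
  have hten : Filter.Tendsto (fun n => p - q n) Filter.atTop (nhds p) := by
    simpa using tendsto_const_nhds.sub hq0
  exact mem_closure_of_tendsto hten (Filter.Eventually.of_forall hqmem)
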